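/- arXiv:2204.03622 — 3 statements merged into one kernel-verified Lean document; each statement's English description precedes it below -/
import Mathlib

section
/- Let g, h : [a,b] → ℝ be continuous functions with h Lipschitz, and let f = g + i·h : [a,b] → ℂ. Then the Hausdorff dimension of the graph of f equals the Hausdorff dimension of the graph of g. -/
open Set Filter

/-- if the imaginary part `h` is Lipschitz, then
dimH G(g + i h) = dimH G(g). -/
theorem dimH_graph_complex_eq_of_lipschitz (a b : ℝ) (hab : a < b) (g h : ℝ → ℝ)
    (hg : ContinuousOn g (Icc a b)) (hh : ContinuousOn h (Icc a b))
    (C₁ : NNReal) (hLip : LipschitzOnWith C₁ h (Icc a b)) :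
    dimH (Set.graphOn (fun x => (g x : ℂ) + h x * Complex.I) (Icc a b)) =
      dimH (Set.graphOn g (Icc a b)) := by
  set φ : ℝ × ℝ → ℝ × ℂ := fun p => (p.1, (p.2 : ℂ) + h p.1 * Complex.I) with hφ
  set ψ : ℝ × ℂ → ℝ × ℝ := fun p => (p.1, p.2.re) with hψ
  set S : Set (ℝ × ℝ) := Set.graphOn g (Icc a b) with hS
  have himg : Set.graphOn (fun x => (g x : ℂ) + h x * Complex.I) (Icc a b) = φ '' S := by
    simp [Set.graphOn, image_image, hφ, hS]
  have hSsub : S ⊆ (Icc a b) ×ˢ (univ : Set ℝ) := by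
    rintro p hp
    rcases hp with ⟨x, hx, rfl⟩
    exact ⟨hx, trivial⟩
  -- φ is Lipschitz on Icc a b ×ˢ univ with constant 1 + C₁
  have hφLip : LipschitzOnWith (1 + C₁) φ ((Icc a b) ×ˢ (univ : Set ℝ)) := by
    apply LipschitzOnWith.of_dist_le_mul
    rintro ⟨x, y⟩ ⟨hx, -⟩ ⟨x', y'⟩ ⟨hx', -⟩
    have hd : dist (h x) (h x') ≤ (C₁ : ℝ) * dist x x' := hLip.dist_le_mul x hx x' hx'
    simp only [hφ, Prod.dist_eq]
    have h2 : dist ((y : ℂ) + h x * Complex.I) ((y' : ℂ) + h x' * Complex.I)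
        ≤ dist y y' + (C₁ : ℝ) * dist x x' := by
      rw [Complex.dist_eq]
      have : (y : ℂ) + h x * Complex.I - ((y' : ℂ) + h x' * Complex.I)
          = ((y - y' : ℝ) : ℂ) + ((h x - h x' : ℝ) : ℂ) * Complex.I := by
        push_cast; ring
      rw [this]
      calc ‖((y - y' : ℝ) : ℂ) + ((h x - h x' : ℝ) : ℂ) * Complex.I‖
          ≤ ‖((y - y' : ℝ) : ℂ)‖ + ‖((h x - h x' : ℝ) : ℂ) * Complex.I‖ :=
            norm_add_le _ _
        _ = |y - y'| + |h x - h x'| := by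
            rw [norm_mul, Complex.norm_I, mul_one, Complex.norm_real, Complex.norm_real, Real.norm_eq_abs, Real.norm_eq_abs]
        _ ≤ dist y y' + (C₁ : ℝ) * dist x x' := by
            simp only [Real.dist_eq] at hd ⊢
            exact add_le_add le_rfl hd
    have hK : (1 : ℝ) ≤ ((1 + C₁ : NNReal) : ℝ) := by
      simp
    apply max_le
    · calc dist x x' ≤ max (dist x x') (dist y y') := le_max_left _ _
        _ ≤ ((1 + C₁ : NNReal) : ℝ) * max (dist x x') (dist y y') := by
            nlinarith [le_max_left (dist x x') (dist y y'), dist_nonneg (x := x) (y := x'),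
              dist_nonneg (x := y) (y := y'), le_max_right (dist x x') (dist y y')]
    · calc dist ((y : ℂ) + h x * Complex.I) ((y' : ℂ) + h x' * Complex.I)
          ≤ dist y y' + (C₁ : ℝ) * dist x x' := h2
        _ ≤ max (dist x x') (dist y y') + (C₁ : ℝ) * max (dist x x') (dist y y') := by
            gcongr
            · exact le_max_right _ _
            · exact le_max_left _ _
        _ = ((1 + C₁ : NNReal) : ℝ) * max (dist x x') (dist y y') := by
            push_cast; ring
  have hψLip : LipschitzWith 1 ψ := by
    apply LipschitzWith.of_dist_le_mul
    intro p q
    simp only [hψ, Prod.dist_eq, NNReal.coe_one, one_mul]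
    apply max_le_max le_rfl
    rw [Real.dist_eq, Complex.dist_eq]
    simpa [Complex.sub_re] using Complex.abs_re_le_norm (p.2 - q.2)
  have hψφ : ψ '' (φ '' S) = S := by
    rw [image_image]
    have : ∀ p ∈ S, ψ (φ p) = p := by
      intro p _
      simp [hφ, hψ, Complex.add_re, Complex.mul_I_re]
    calc (fun p => ψ (φ p)) '' S = id '' S := image_congr this
      _ = S := image_id S
  rw [himg]
  apply le_antisymm
  · exact (hφLip.mono hSsub).dimH_image_le
  · calc dimH S = dimH (ψ '' (φ '' S)) := by rw [hψφ]
      _ ≤ dimH (φ '' S) := hψLip.dimH_image_le _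
end

section
/- Let {W₁,…,W_{N−1}} be an IFS on J × ℂ (J = [x₁, x_N] a compact interval, metric D((t₁,z₁),(t₂,z₂)) = |t₁−t₂| + |z₁−z₂|) whose attractor is the graph G of a continuous function, and suppose each Wₖ satisfies cₖ·D(p,q) ≤ D(Wₖ(p), Wₖ(q)) ≤ Cₖ·D(p,q) with 0 < cₖ ≤ Cₖ < 1. If the IFS satisfies the strong open set condition with the open set V = (x₁, x_N) × ℂ, then r ≤ dimH(G), where r is the unique solution of Σₖ cₖ^r = 1. -/
open Set Filter ENNReal

/-- The taxicab-type metric `D((t₁,z₁),(t₂,z₂)) = |t₁ - t₂| + |z₁ - z₂|` on `ℝ × ℂ`. -/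
noncomputable def Dmetric (p q : ℝ × ℂ) : ℝ := |p.1 - q.1| + ‖p.2 - q.2‖

namespace MoranAux

lemma D_nonneg (p q : ℝ × ℂ) : 0 ≤ Dmetric p q :=
  add_nonneg (abs_nonneg _) (norm_nonneg _)

lemma D_comm (p q : ℝ × ℂ) : Dmetric p q = Dmetric q p := by
  unfold Dmetric; rw [abs_sub_comm, norm_sub_rev]

lemma D_triangle (p q s : ℝ × ℂ) : Dmetric p s ≤ Dmetric p q + Dmetric q s := by
  unfold Dmetric
  have h1 : |p.1 - s.1| ≤ |p.1 - q.1| + |q.1 - s.1| := abs_sub_le _ _ _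
  have h2 : ‖p.2 - s.2‖ ≤ ‖p.2 - q.2‖ + ‖q.2 - s.2‖ := norm_sub_le_norm_sub_add_norm_sub _ _ _
  linarith

lemma D_eq_zero {p q : ℝ × ℂ} (h : Dmetric p q ≤ 0) : p = q := by
  unfold Dmetric at h
  have h1 : |p.1 - q.1| = 0 := le_antisymm (by nlinarith [abs_nonneg (p.1 - q.1), norm_nonneg (p.2 - q.2)]) (abs_nonneg _)
  have h2 : ‖p.2 - q.2‖ = 0 := le_antisymm (by nlinarith [abs_nonneg (p.1 - q.1), norm_nonneg (p.2 - q.2)]) (norm_nonneg _)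
  have : p.1 = q.1 := by have := abs_eq_zero.1 h1; linarith
  have h2' : p.2 = q.2 := by have := norm_eq_zero.1 h2; exact sub_eq_zero.1 this
  exact Prod.ext this h2'

lemma abs_fst_le_D (p q : ℝ × ℂ) : |p.1 - q.1| ≤ Dmetric p q :=
  le_add_of_nonneg_right (norm_nonneg _)

lemma D_le_two_dist (p q : ℝ × ℂ) : Dmetric p q ≤ 2 * dist p q := by
  have h1 : |p.1 - q.1| = dist p.1 q.1 := (Real.dist_eq _ _).symm
  have h2 : ‖p.2 - q.2‖ = dist p.2 q.2 := (dist_eq_norm _ _).symm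
  have := le_max_left (dist p.1 q.1) (dist p.2 q.2)
  have := le_max_right (dist p.1 q.1) (dist p.2 q.2)
  rw [Prod.dist_eq]
  unfold Dmetric
  rw [h1, h2]
  set a := dist p.1 q.1
  set b := dist p.2 q.2
  have : a ≤ max a b := le_max_left _ _
  have : b ≤ max a b := le_max_right _ _
  linarith

/-- The `Dmetric` diameter of a set, as an extended real. -/
noncomputable def DD (U : Set (ℝ × ℂ)) : ℝ≥0∞ :=
  ⨆ p ∈ U, ⨆ q ∈ U, ENNReal.ofReal (Dmetric p q)

lemma le_DD {U : Set (ℝ × ℂ)} {p q : ℝ × ℂ} (hp : p ∈ U) (hq : q ∈ U) :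
    ENNReal.ofReal (Dmetric p q) ≤ DD U := by
  have h1 : (⨆ q' ∈ U, ENNReal.ofReal (Dmetric p q')) ≤ DD U :=
    le_biSup (fun p' => ⨆ q' ∈ U, ENNReal.ofReal (Dmetric p' q')) hp
  exact le_trans (le_biSup (fun q' => ENNReal.ofReal (Dmetric p q')) hq) h1

lemma DD_le {U : Set (ℝ × ℂ)} {d : ℝ≥0∞} (h : ∀ p ∈ U, ∀ q ∈ U, ENNReal.ofReal (Dmetric p q) ≤ d) :
    DD U ≤ d :=
  iSup₂_le fun p hp => iSup₂_le fun q hq => h p hp q hq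

lemma DD_le_two_diam (U : Set (ℝ × ℂ)) : DD U ≤ 2 * EMetric.diam U := by
  refine DD_le fun p hp q hq => ?_
  calc ENNReal.ofReal (Dmetric p q) ≤ ENNReal.ofReal (2 * dist p q) :=
        ENNReal.ofReal_le_ofReal (D_le_two_dist p q)
    _ = 2 * ENNReal.ofReal (dist p q) := by
        rw [ENNReal.ofReal_mul (by norm_num)]; norm_num
    _ = 2 * edist p q := by rw [edist_dist]
    _ ≤ 2 * EMetric.diam U := by
        gcongr
        exact EMetric.edist_le_diam_of_mem hp hq



lemma content_step {ιA : Type} {ι : Type} [DecidableEq ι]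
    (X : Set (ℝ × ℂ)) (hXne : X.Nonempty)
    (J : Finset ιA) (T : ιA → ℝ × ℂ → ℝ × ℂ) (γ : ιA → ℝ)
    (hγ0 : ∀ j ∈ J, 0 < γ j)
    (hmaps : ∀ j ∈ J, T j '' X ⊆ X)
    (hanti : ∀ j ∈ J, ∀ p q, γ j * Dmetric p q ≤ Dmetric (T j p) (T j q))
    (d₀ : ℝ) (hd₀ : 0 < d₀)
    (hsep : ∀ i ∈ J, ∀ j ∈ J, i ≠ j → ∀ p ∈ T i '' X, ∀ q ∈ T j '' X, d₀ ≤ Dmetric p q)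
    (hJ2 : 2 ≤ J.card) (t : ℝ) (ht : 0 < t)
    (hsum : 1 ≤ ∑ j ∈ J, ENNReal.ofReal (γ j) ^ t) :
    ∀ (N : ℕ) (s : Finset ι) (U : ι → Set (ℝ × ℂ)), s.card ≤ N →
      (X ⊆ ⋃ i ∈ s, U i) → ENNReal.ofReal d₀ ^ t ≤ ∑ i ∈ s, DD (U i) ^ t := by
  classical
  intro N
  induction N with
  | zero =>
    intro s U hcard hcover
    have hs : s = ∅ := Finset.card_eq_zero.1 (Nat.le_zero.1 hcard)
    subst hs
    obtain ⟨x, hx⟩ := hXne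
    exact absurd (hcover hx) (by simp)
  | succ N ih =>
    intro s U hcard hcover
    by_cases hbig : ∃ i ∈ s, ENNReal.ofReal d₀ ≤ DD (U i)
    · obtain ⟨i, his, hDi⟩ := hbig
      calc ENNReal.ofReal d₀ ^ t ≤ DD (U i) ^ t := ENNReal.rpow_le_rpow hDi ht.le
        _ ≤ ∑ i ∈ s, DD (U i) ^ t := Finset.single_le_sum (f := fun i => DD (U i) ^ t) (fun _ _ => zero_le) his
    · push_neg at hbig
      set sJ : ιA → Finset ι := fun j => s.filter (fun i => (U i ∩ T j '' X).Nonempty) with hsJ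
      have hsJ_sub : ∀ j, sJ j ⊆ s := fun j => Finset.filter_subset _ _
      have hdisjJ : ∀ j₁ ∈ J, ∀ j₂ ∈ J, j₁ ≠ j₂ → Disjoint (sJ j₁) (sJ j₂) := by
        intro j₁ h₁ j₂ h₂ hne
        rw [Finset.disjoint_left]
        intro i hi₁ hi₂
        simp only [hsJ, Finset.mem_filter] at hi₁ hi₂
        obtain ⟨p, hpU, hpX⟩ := hi₁.2
        obtain ⟨q, hqU, hqX⟩ := hi₂.2
        have hd : d₀ ≤ Dmetric p q := hsep j₁ h₁ j₂ h₂ hne p hpX q hqX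
        have : ENNReal.ofReal d₀ ≤ DD (U i) :=
          le_trans (ENNReal.ofReal_le_ofReal hd) (le_DD hpU hqU)
        exact absurd this (not_le.2 (hbig i hi₁.1))
      have hcovJ : ∀ j ∈ J, X ⊆ ⋃ i ∈ sJ j, T j ⁻¹' (U i) := by
        intro j hj x hx
        have hTX : T j x ∈ X := hmaps j hj ⟨x, hx, rfl⟩
        obtain ⟨i, his, hTx⟩ : ∃ i ∈ s, T j x ∈ U i := by
          have := hcover hTX; simpa using this
        have hiJ : i ∈ sJ j := by
          simp only [hsJ, Finset.mem_filter]
          exact ⟨his, ⟨T j x, hTx, ⟨x, hx, rfl⟩⟩⟩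
        exact Set.mem_biUnion hiJ hTx
      have hne_sJ : ∀ j ∈ J, (sJ j).Nonempty := by
        intro j hj
        obtain ⟨x, hx⟩ := hXne
        have hmem := hcovJ j hj hx
        simp only [Set.mem_iUnion] at hmem
        obtain ⟨i, hi, -⟩ := hmem
        exact ⟨i, hi⟩
      have hcardJ : ∀ j ∈ J, (sJ j).card ≤ N := by
        intro j hj
        obtain ⟨j₂, hj₂, hj₂ne⟩ :=
          Finset.exists_mem_ne (lt_of_lt_of_le one_lt_two hJ2) j
        obtain ⟨i₂, hi₂⟩ := hne_sJ j₂ hj₂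
        have hsub : sJ j ⊆ s.erase i₂ := by
          intro i hi
          refine Finset.mem_erase.2 ⟨?_, hsJ_sub j hi⟩
          intro heq
          subst heq
          exact (Finset.disjoint_left.1 (hdisjJ j hj j₂ hj₂ (Ne.symm hj₂ne))) hi hi₂
        calc (sJ j).card ≤ (s.erase i₂).card := Finset.card_le_card hsub
          _ = s.card - 1 := Finset.card_erase_of_mem (hsJ_sub j₂ hi₂)
          _ ≤ N := by omega
      have key : ∀ j ∈ J, ENNReal.ofReal d₀ ^ t * ENNReal.ofReal (γ j) ^ t
          ≤ ∑ i ∈ sJ j, DD (U i) ^ t := by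
        intro j hj
        have hγj := hγ0 j hj
        set g := ENNReal.ofReal (γ j) with hg
        have hg0 : g ≠ 0 := by simp [hg, ENNReal.ofReal_eq_zero, not_le, hγj]
        have hgtop : g ≠ ∞ := ENNReal.ofReal_ne_top
        have hpre : ∀ i, DD (T j ⁻¹' (U i)) ≤ DD (U i) / g := by
          intro i
          refine DD_le fun p hp q hq => ?_
          have h1 : γ j * Dmetric p q ≤ Dmetric (T j p) (T j q) := hanti j hj p q
          have h2 : ENNReal.ofReal (Dmetric (T j p) (T j q)) ≤ DD (U i) := le_DD hp hq
          have h3 : Dmetric p q ≤ Dmetric (T j p) (T j q) / γ j := by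
            rw [le_div_iff₀ hγj]; linarith
          calc ENNReal.ofReal (Dmetric p q)
              ≤ ENNReal.ofReal (Dmetric (T j p) (T j q) / γ j) := ENNReal.ofReal_le_ofReal h3
            _ = ENNReal.ofReal (Dmetric (T j p) (T j q)) / g := by
                rw [ENNReal.ofReal_div_of_pos hγj]
            _ ≤ DD (U i) / g := by gcongr
        have hIH := ih (sJ j) (fun i => T j ⁻¹' (U i)) (hcardJ j hj) (hcovJ j hj)
        have hstep : ENNReal.ofReal d₀ ^ t ≤ (∑ i ∈ sJ j, DD (U i) ^ t) * (g ^ t)⁻¹ := by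
          calc ENNReal.ofReal d₀ ^ t ≤ ∑ i ∈ sJ j, DD (T j ⁻¹' (U i)) ^ t := hIH
            _ ≤ ∑ i ∈ sJ j, (DD (U i) / g) ^ t := by
                refine Finset.sum_le_sum fun i _ => ?_
                exact ENNReal.rpow_le_rpow (hpre i) ht.le
            _ = ∑ i ∈ sJ j, DD (U i) ^ t * (g ^ t)⁻¹ := by
                refine Finset.sum_congr rfl fun i _ => ?_
                rw [ENNReal.div_rpow_of_nonneg _ _ ht.le, div_eq_mul_inv]
            _ = (∑ i ∈ sJ j, DD (U i) ^ t) * (g ^ t)⁻¹ := (Finset.sum_mul _ _ _).symm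
        have hgt0 : g ^ t ≠ 0 := (ENNReal.rpow_pos (pos_iff_ne_zero.2 hg0) hgtop).ne'
        have hgttop : g ^ t ≠ ∞ := ENNReal.rpow_ne_top_of_nonneg ht.le hgtop
        have hmul := mul_le_mul_left hstep (g ^ t)
        rwa [mul_assoc, ENNReal.inv_mul_cancel hgt0 hgttop, mul_one] at hmul
      calc ENNReal.ofReal d₀ ^ t = ENNReal.ofReal d₀ ^ t * 1 := (mul_one _).symm
        _ ≤ ENNReal.ofReal d₀ ^ t * ∑ j ∈ J, ENNReal.ofReal (γ j) ^ t := by gcongr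
        _ = ∑ j ∈ J, ENNReal.ofReal d₀ ^ t * ENNReal.ofReal (γ j) ^ t := Finset.mul_sum _ _ _
        _ ≤ ∑ j ∈ J, ∑ i ∈ sJ j, DD (U i) ^ t := Finset.sum_le_sum key
        _ = ∑ i ∈ J.biUnion sJ, DD (U i) ^ t := by
            rw [Finset.sum_biUnion]
            intro j₁ h₁ j₂ h₂ hne
            exact hdisjJ j₁ h₁ j₂ h₂ hne
        _ ≤ ∑ i ∈ s, DD (U i) ^ t := by
            refine Finset.sum_le_sum_of_subset ?_
            intro i hi
            obtain ⟨j, hj, hij⟩ := Finset.mem_biUnion.1 hi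
            exact hsJ_sub j hij



lemma D_self (p : ℝ × ℂ) : Dmetric p p = 0 := by
  unfold Dmetric; simp

lemma DD_empty : DD (∅ : Set (ℝ × ℂ)) = 0 := by
  unfold DD; simp

lemma continuous_D (q : ℝ × ℂ) : Continuous fun p : ℝ × ℂ => Dmetric p q := by
  unfold Dmetric
  exact ((continuous_fst.sub continuous_const).abs).add
    ((continuous_snd.sub continuous_const).norm)

lemma rpow_add_le (a b : ℝ≥0∞) {t : ℝ} (ht : 0 ≤ t) :
    (a + b) ^ t ≤ 2 ^ t * a ^ t + 2 ^ t * b ^ t := by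
  have h1 : a + b ≤ 2 * max a b := by
    rw [two_mul]
    exact add_le_add (le_max_left a b) (le_max_right a b)
  calc (a + b) ^ t ≤ (2 * max a b) ^ t := ENNReal.rpow_le_rpow h1 ht
    _ = 2 ^ t * (max a b) ^ t := ENNReal.mul_rpow_of_nonneg _ _ ht
    _ ≤ 2 ^ t * (a ^ t + b ^ t) := by
        gcongr
        rcases max_cases a b with ⟨hm, _⟩ | ⟨hm, _⟩ <;> rw [hm]
        · exact le_add_of_nonneg_right zero_le
        · exact le_add_of_nonneg_left zero_le
    _ = 2 ^ t * a ^ t + 2 ^ t * b ^ t := by ring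

lemma content_countable {ιA : Type}
    (X : Set (ℝ × ℂ)) (hXne : X.Nonempty) (hXc : IsCompact X)
    (J : Finset ιA) (T : ιA → ℝ × ℂ → ℝ × ℂ) (γ : ιA → ℝ)
    (hγ0 : ∀ j ∈ J, 0 < γ j)
    (hmaps : ∀ j ∈ J, T j '' X ⊆ X)
    (hanti : ∀ j ∈ J, ∀ p q, γ j * Dmetric p q ≤ Dmetric (T j p) (T j q))
    (d₀ : ℝ) (hd₀ : 0 < d₀)
    (hsep : ∀ i ∈ J, ∀ j ∈ J, i ≠ j → ∀ p ∈ T i '' X, ∀ q ∈ T j '' X, d₀ ≤ Dmetric p q)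
    (hJ2 : 2 ≤ J.card) (t : ℝ) (ht : 0 < t)
    (hsum : 1 ≤ ∑ j ∈ J, ENNReal.ofReal (γ j) ^ t)
    (U : ℕ → Set (ℝ × ℂ)) (hcover : X ⊆ ⋃ i, U i) (ε : ℝ) (hε : 0 < ε) :
    ENNReal.ofReal d₀ ^ t ≤ 2 ^ t * ∑' i, DD (U i) ^ t
      + ENNReal.ofReal ((2 * ε) ^ t) * (2 ^ t * (1 - ENNReal.ofReal ((1/2 : ℝ) ^ t))⁻¹) := by
  classical
  set e : ℕ → ℝ := fun i => ε * (1/2) ^ i with he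
  have he0 : ∀ i, 0 < e i := fun i => mul_pos hε (by positivity)
  set Vo : ℕ → Set (ℝ × ℂ) := fun i => {p | ∃ w ∈ U i, Dmetric p w < e i} with hVo
  have hVopen : ∀ i, IsOpen (Vo i) := by
    intro i
    have : Vo i = ⋃ w ∈ U i, {p | Dmetric p w < e i} := by
      ext p; simp [hVo]
    rw [this]
    exact isOpen_biUnion fun w _ => isOpen_lt (continuous_D w) continuous_const
  have hXV : X ⊆ ⋃ i, Vo i := by
    intro p hp
    obtain ⟨i, hi⟩ := Set.mem_iUnion.1 (hcover hp)
    exact Set.mem_iUnion.2 ⟨i, ⟨p, hi, by rw [D_self]; exact he0 i⟩⟩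
  obtain ⟨s, hs⟩ := hXc.elim_finite_subcover Vo hVopen hXV
  have hmain := content_step X hXne J T γ hγ0 hmaps hanti d₀ hd₀ hsep hJ2 t ht hsum
    s.card s Vo le_rfl (by intro p hp; simpa using hs hp)
  have hDDV : ∀ i, DD (Vo i) ≤ DD (U i) + ENNReal.ofReal (2 * e i) := by
    intro i
    refine DD_le fun p hp q hq => ?_
    obtain ⟨w, hw, hpw⟩ := hp
    obtain ⟨w', hw', hqw⟩ := hq
    have htri : Dmetric p q ≤ Dmetric p w + Dmetric w w' + Dmetric w' q := by
      have h1 := D_triangle p w q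
      have h2 := D_triangle w w' q
      linarith
    calc ENNReal.ofReal (Dmetric p q)
        ≤ ENNReal.ofReal (Dmetric p w + Dmetric w w' + Dmetric w' q) :=
          ENNReal.ofReal_le_ofReal htri
      _ ≤ ENNReal.ofReal (Dmetric p w) + ENNReal.ofReal (Dmetric w w')
            + ENNReal.ofReal (Dmetric w' q) :=
          le_trans (ENNReal.ofReal_add_le) (by gcongr; exact ENNReal.ofReal_add_le)
      _ ≤ ENNReal.ofReal (e i) + DD (U i) + ENNReal.ofReal (e i) := by
          refine add_le_add (add_le_add ?_ ?_) ?_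
          · exact ENNReal.ofReal_le_ofReal hpw.le
          · exact le_DD hw hw'
          · exact ENNReal.ofReal_le_ofReal (by rw [D_comm]; exact hqw.le)
      _ = DD (U i) + ENNReal.ofReal (2 * e i) := by
          rw [two_mul, ENNReal.ofReal_add (he0 i).le (he0 i).le]; ring
  have hterm : ∀ i, DD (Vo i) ^ t ≤ 2 ^ t * DD (U i) ^ t
      + 2 ^ t * ENNReal.ofReal (2 * e i) ^ t := by
    intro i
    exact le_trans (ENNReal.rpow_le_rpow (hDDV i) ht.le) (rpow_add_le _ _ ht.le)
  have hgeo : ∑' i, ENNReal.ofReal (2 * e i) ^ t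
      = ENNReal.ofReal ((2 * ε) ^ t) * (1 - ENNReal.ofReal ((1/2 : ℝ) ^ t))⁻¹ := by
    have hterm2 : ∀ i : ℕ, ENNReal.ofReal (2 * e i) ^ t
        = ENNReal.ofReal ((2 * ε) ^ t) * (ENNReal.ofReal ((1/2 : ℝ) ^ t)) ^ i := by
      intro i
      have hpos : (0:ℝ) < 2 * ε := by linarith
      have h2e : 2 * e i = (2 * ε) * (1/2) ^ i := by rw [he]; ring
      have hhalfpow : ((1/2 : ℝ) ^ i) ^ t = ((1/2 : ℝ) ^ t) ^ i := by
        rw [← Real.rpow_natCast ((1/2 : ℝ)) i, ← Real.rpow_mul (by norm_num),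
          mul_comm, Real.rpow_mul (by norm_num), Real.rpow_natCast]
      have hreal : (2 * e i) ^ t = (2 * ε) ^ t * ((1/2 : ℝ) ^ t) ^ i := by
        rw [h2e, Real.mul_rpow hpos.le (by positivity), hhalfpow]
      rw [ENNReal.ofReal_rpow_of_pos (by rw [h2e]; positivity), hreal,
        ENNReal.ofReal_mul (by positivity), ENNReal.ofReal_pow (by positivity)]
    calc ∑' i, ENNReal.ofReal (2 * e i) ^ t
        = ∑' i, ENNReal.ofReal ((2 * ε) ^ t) * (ENNReal.ofReal ((1/2 : ℝ) ^ t)) ^ i := by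
          exact tsum_congr hterm2
      _ = ENNReal.ofReal ((2 * ε) ^ t) * ∑' i, (ENNReal.ofReal ((1/2 : ℝ) ^ t)) ^ i :=
          ENNReal.tsum_mul_left
      _ = ENNReal.ofReal ((2 * ε) ^ t) * (1 - ENNReal.ofReal ((1/2 : ℝ) ^ t))⁻¹ := by
          rw [ENNReal.tsum_geometric]
  calc ENNReal.ofReal d₀ ^ t ≤ ∑ i ∈ s, DD (Vo i) ^ t := hmain
    _ ≤ ∑ i ∈ s, (2 ^ t * DD (U i) ^ t + 2 ^ t * ENNReal.ofReal (2 * e i) ^ t) :=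
        Finset.sum_le_sum fun i _ => hterm i
    _ = 2 ^ t * ∑ i ∈ s, DD (U i) ^ t + 2 ^ t * ∑ i ∈ s, ENNReal.ofReal (2 * e i) ^ t := by
        rw [Finset.sum_add_distrib, Finset.mul_sum, Finset.mul_sum]
    _ ≤ 2 ^ t * ∑' i, DD (U i) ^ t + 2 ^ t * ∑' i, ENNReal.ofReal (2 * e i) ^ t := by
        gcongr <;> exact ENNReal.sum_le_tsum s
    _ = 2 ^ t * ∑' i, DD (U i) ^ t
        + ENNReal.ofReal ((2 * ε) ^ t) * (2 ^ t * (1 - ENNReal.ofReal ((1/2 : ℝ) ^ t))⁻¹) := by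
        rw [hgeo]; ring

lemma exists_eps {t ρ : ℝ} (ht : 0 < t) (hρ : 0 < ρ) : ∃ ε : ℝ, 0 < ε ∧ (2 * ε) ^ t ≤ ρ := by
  refine ⟨ρ ^ t⁻¹ / 2, by positivity, ?_⟩
  have h2 : 2 * (ρ ^ t⁻¹ / 2) = ρ ^ t⁻¹ := by ring
  rw [h2, Real.rpow_inv_rpow hρ.le ht.ne']

open MeasureTheory in
lemma dimH_lower {ιA : Type}
    (X : Set (ℝ × ℂ)) (hXne : X.Nonempty) (hXc : IsCompact X)
    (J : Finset ιA) (T : ιA → ℝ × ℂ → ℝ × ℂ) (γ : ιA → ℝ)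
    (hγ0 : ∀ j ∈ J, 0 < γ j)
    (hmaps : ∀ j ∈ J, T j '' X ⊆ X)
    (hanti : ∀ j ∈ J, ∀ p q, γ j * Dmetric p q ≤ Dmetric (T j p) (T j q))
    (d₀ : ℝ) (hd₀ : 0 < d₀)
    (hsep : ∀ i ∈ J, ∀ j ∈ J, i ≠ j → ∀ p ∈ T i '' X, ∀ q ∈ T j '' X, d₀ ≤ Dmetric p q)
    (hJ2 : 2 ≤ J.card) (t : ℝ) (ht : 0 < t)
    (hsumR : 1 ≤ ∑ j ∈ J, γ j ^ t) :
    ENNReal.ofReal t ≤ dimH X := by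
  have hsum : 1 ≤ ∑ j ∈ J, ENNReal.ofReal (γ j) ^ t := by
    have hco : ∀ j ∈ J, ENNReal.ofReal (γ j) ^ t = ENNReal.ofReal (γ j ^ t) :=
      fun j hj => ENNReal.ofReal_rpow_of_pos (hγ0 j hj)
    rw [Finset.sum_congr rfl hco, ← ENNReal.ofReal_sum_of_nonneg
      (fun j hj => (Real.rpow_pos_of_pos (hγ0 j hj) t).le)]
    calc (1 : ℝ≥0∞) = ENNReal.ofReal 1 := ENNReal.ofReal_one.symm
      _ ≤ _ := ENNReal.ofReal_le_ofReal hsumR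
  set κ := ENNReal.ofReal d₀ ^ t with hκ
  have hκ0 : κ ≠ 0 := (ENNReal.rpow_pos (ENNReal.ofReal_pos.2 hd₀) ENNReal.ofReal_ne_top).ne'
  have hκtop : κ ≠ ∞ := ENNReal.rpow_ne_top_of_nonneg ht.le ENNReal.ofReal_ne_top
  set q : ℝ≥0∞ := ENNReal.ofReal ((1/2 : ℝ) ^ t) with hq
  have hq1 : q < 1 := by
    rw [hq, ← ENNReal.ofReal_one]
    exact (ENNReal.ofReal_lt_ofReal_iff_of_nonneg (by positivity)).2
      (Real.rpow_lt_one (by norm_num) (by norm_num) ht)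
  set B := (2 : ℝ≥0∞) ^ t * (1 - q)⁻¹ with hB
  have h2t_top : (2 : ℝ≥0∞) ^ t ≠ ∞ := ENNReal.rpow_ne_top_of_nonneg ht.le (by norm_num)
  have h2t_0 : (2 : ℝ≥0∞) ^ t ≠ 0 := (ENNReal.rpow_pos (by norm_num) (by norm_num)).ne'
  have hBtop : B ≠ ∞ := by
    rw [hB]
    exact ENNReal.mul_ne_top h2t_top (ENNReal.inv_ne_top.2 (tsub_pos_iff_lt.2 hq1).ne')
  have hB0 : B ≠ 0 := by
    rw [hB]
    refine mul_ne_zero h2t_0 (ENNReal.inv_ne_zero.2 ?_)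
    exact ne_top_of_le_ne_top ENNReal.one_ne_top tsub_le_self
  -- choice of ε
  have hκ2top : κ / 2 ≠ ∞ := (ENNReal.div_lt_top hκtop (by norm_num)).ne
  have hκ2_0 : κ / 2 ≠ 0 := by simp [ENNReal.div_eq_zero_iff, hκ0]
  set y := (κ / 2) / B with hy
  have hytop : y ≠ ∞ := by
    rw [hy]
    exact (ENNReal.div_lt_top hκ2top hB0).ne
  have hy0 : y ≠ 0 := by
    rw [hy]
    simp only [ne_eq, ENNReal.div_eq_zero_iff, not_or]
    exact ⟨⟨hκ0, by norm_num⟩, hBtop⟩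
  have hρpos : 0 < y.toReal := ENNReal.toReal_pos hy0 hytop
  obtain ⟨ε, hε, hεle⟩ := exists_eps ht hρpos
  have hεB : ENNReal.ofReal ((2 * ε) ^ t) * B ≤ κ / 2 := by
    calc ENNReal.ofReal ((2 * ε) ^ t) * B ≤ ENNReal.ofReal y.toReal * B := by
          exact mul_le_mul_left (ENNReal.ofReal_le_ofReal hεle) _
      _ = (κ / 2) / B * B := by rw [ENNReal.ofReal_toReal hytop, hy]
      _ = κ / 2 := ENNReal.div_mul_cancel hB0 hBtop
  -- every countable cover has large guarded sum
  set D2 : ℝ≥0∞ := (2 : ℝ≥0∞) ^ t * (2 : ℝ≥0∞) ^ t with hD2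
  have hD2top : D2 ≠ ∞ := ENNReal.mul_ne_top h2t_top h2t_top
  have hD2_0 : D2 ≠ 0 := mul_ne_zero h2t_0 h2t_0
  set κ₀ := (κ / 2) / D2 with hκ₀
  have hκ₀0 : κ₀ ≠ 0 := by
    rw [hκ₀]
    simp only [ne_eq, ENNReal.div_eq_zero_iff, not_or]
    exact ⟨⟨hκ0, by norm_num⟩, hD2top⟩
  have hbound : ∀ (U : ℕ → Set (ℝ × ℂ)), (X ⊆ ⋃ i, U i) →
      κ₀ ≤ ∑' i, ⨆ _ : (U i).Nonempty, EMetric.diam (U i) ^ t := by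
    intro U hcov
    have h1 : κ ≤ 2 ^ t * ∑' i, DD (U i) ^ t + κ / 2 := by
      refine le_trans (content_countable X hXne hXc J T γ hγ0 hmaps hanti d₀ hd₀ hsep hJ2
        t ht hsum U hcov ε hε) ?_
      exact add_le_add_right hεB _
    have h2 : κ / 2 ≤ 2 ^ t * ∑' i, DD (U i) ^ t := by
      have := tsub_le_iff_right.2 h1
      rwa [ENNReal.sub_half hκtop] at this
    have h3 : ∑' i, DD (U i) ^ t ≤ 2 ^ t * ∑' i, ⨆ _ : (U i).Nonempty, EMetric.diam (U i) ^ t := by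
      rw [← ENNReal.tsum_mul_left]
      refine ENNReal.tsum_le_tsum fun i => ?_
      by_cases hne : (U i).Nonempty
      · rw [iSup_pos hne]
        calc DD (U i) ^ t ≤ (2 * EMetric.diam (U i)) ^ t :=
              ENNReal.rpow_le_rpow (DD_le_two_diam _) ht.le
          _ = 2 ^ t * EMetric.diam (U i) ^ t := ENNReal.mul_rpow_of_nonneg _ _ ht.le
      · have hUi : U i = ∅ := Set.not_nonempty_iff_eq_empty.1 hne
        rw [hUi, DD_empty, ENNReal.zero_rpow_of_pos ht]
        exact zero_le
    have h4 : κ / 2 ≤ D2 * ∑' i, ⨆ _ : (U i).Nonempty, EMetric.diam (U i) ^ t := by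
      calc κ / 2 ≤ 2 ^ t * ∑' i, DD (U i) ^ t := h2
        _ ≤ 2 ^ t * (2 ^ t * ∑' i, ⨆ _ : (U i).Nonempty, EMetric.diam (U i) ^ t) := by gcongr
        _ = D2 * ∑' i, ⨆ _ : (U i).Nonempty, EMetric.diam (U i) ^ t := by rw [hD2, mul_assoc]
    rw [hκ₀, ENNReal.div_le_iff_le_mul (Or.inl hD2_0) (Or.inl hD2top)]
    rw [mul_comm] at h4
    exact h4
  have hmeas : μH[t] X ≠ 0 := by
    intro h0
    rw [MeasureTheory.Measure.hausdorffMeasure_apply] at h0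
    have hinf : (⨅ (U : ℕ → Set (ℝ × ℂ)) (_ : X ⊆ ⋃ n, U n)
        (_ : ∀ n, EMetric.diam (U n) ≤ 1), ∑' n, ⨆ _ : (U n).Nonempty, EMetric.diam (U n) ^ t)
        ≤ 0 := by
      rw [← h0]
      exact le_iSup₂ (f := fun (r : ℝ≥0∞) (_ : 0 < r) =>
        ⨅ (U : ℕ → Set (ℝ × ℂ)) (_ : X ⊆ ⋃ n, U n) (_ : ∀ n, EMetric.diam (U n) ≤ r),
          ∑' n, ⨆ _ : (U n).Nonempty, EMetric.diam (U n) ^ t) 1 zero_lt_one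
    have hge : κ₀ ≤ (⨅ (U : ℕ → Set (ℝ × ℂ)) (_ : X ⊆ ⋃ n, U n)
        (_ : ∀ n, EMetric.diam (U n) ≤ 1), ∑' n, ⨆ _ : (U n).Nonempty, EMetric.diam (U n) ^ t) :=
      le_iInf fun U => le_iInf fun hcov => le_iInf fun _ => hbound U hcov
    exact hκ₀0 (le_antisymm (le_trans hge hinf) zero_le)
  have hcoe : ((t.toNNReal : ℝ)) = t := Real.coe_toNNReal t ht.le
  have := le_dimH_of_hausdorffMeasure_ne_zero (s := X) (d := t.toNNReal) (by rwa [hcoe])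
  exact this

/-! ### Words and compositions -/

lemma dist_le_D (p q : ℝ × ℂ) : dist p q ≤ Dmetric p q := by
  rw [Prod.dist_eq]
  have h1 : dist p.1 q.1 = |p.1 - q.1| := Real.dist_eq _ _
  have h2 : dist p.2 q.2 = ‖p.2 - q.2‖ := dist_eq_norm _ _
  apply max_le
  · rw [h1]; exact abs_fst_le_D p q
  · rw [h2]; exact le_add_of_nonneg_left (abs_nonneg _)

lemma continuous_of_Dlip {f : ℝ × ℂ → ℝ × ℂ} {L : ℝ} (hL : 0 ≤ L)
    (h : ∀ p q, Dmetric (f p) (f q) ≤ L * Dmetric p q) : Continuous f := by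
  have hlip : LipschitzWith (Real.toNNReal (2 * L)) f := by
    apply LipschitzWith.of_dist_le_mul
    intro p q
    have h1 : dist (f p) (f q) ≤ Dmetric (f p) (f q) := dist_le_D _ _
    have h2 : Dmetric p q ≤ 2 * dist p q := D_le_two_dist _ _
    have h3 : (Real.toNNReal (2 * L) : ℝ) = 2 * L := Real.coe_toNNReal _ (by linarith)
    rw [h3]
    calc dist (f p) (f q) ≤ L * Dmetric p q := le_trans h1 (h p q)
      _ ≤ L * (2 * dist p q) := mul_le_mul_of_nonneg_left h2 hL
      _ = 2 * L * dist p q := by ring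
  exact hlip.continuous

variable {n : ℕ}

/-- Composition of the IFS maps along a word. -/
def wcomp (W : Fin n → ℝ × ℂ → ℝ × ℂ) : ∀ {m : ℕ}, (Fin m → Fin n) → ℝ × ℂ → ℝ × ℂ
  | 0, _ => id
  | _ + 1, w => W (w 0) ∘ wcomp W (Fin.tail w)

/-- The product of the constants along a word. -/
noncomputable def cprod (c : Fin n → ℝ) {m : ℕ} (w : Fin m → Fin n) : ℝ := ∏ i, c (w i)

lemma cprod_zero (c : Fin n → ℝ) (w : Fin 0 → Fin n) : cprod c w = 1 := by
  simp [cprod]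

lemma cprod_succ (c : Fin n → ℝ) {m : ℕ} (w : Fin (m + 1) → Fin n) :
    cprod c w = c (w 0) * cprod c (Fin.tail w) := by
  unfold cprod
  rw [Fin.prod_univ_succ]
  rfl

lemma cprod_pos {c : Fin n → ℝ} (hc : ∀ k, 0 < c k) {m : ℕ} (w : Fin m → Fin n) :
    0 < cprod c w :=
  Finset.prod_pos fun i _ => hc (w i)

lemma cprod_le {c : Fin n → ℝ} {Cm : ℝ} (hc : ∀ k, 0 < c k) (hle : ∀ k, c k ≤ Cm)
    {m : ℕ} (w : Fin m → Fin n) : cprod c w ≤ Cm ^ m := by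
  unfold cprod
  calc ∏ i, c (w i) ≤ ∏ _i : Fin m, Cm :=
        Finset.prod_le_prod (fun i _ => (hc (w i)).le) (fun i _ => hle (w i))
    _ = Cm ^ m := by rw [Finset.prod_const, Finset.card_univ, Fintype.card_fin]

lemma wcomp_image_subset {W : Fin n → ℝ × ℂ → ℝ × ℂ} {X : Set (ℝ × ℂ)}
    (hW : ∀ k, W k '' X ⊆ X) : ∀ {m : ℕ} (w : Fin m → Fin n), wcomp W w '' X ⊆ X := by
  intro m
  induction m with
  | zero => intro w; simp [wcomp]
  | succ m ih =>
    intro w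
    show (W (w 0) ∘ wcomp W (Fin.tail w)) '' X ⊆ X
    rw [Set.image_comp]
    exact le_trans (Set.image_mono (ih (Fin.tail w))) (hW (w 0))

lemma wcomp_anti {W : Fin n → ℝ × ℂ → ℝ × ℂ} {c : Fin n → ℝ} (hc : ∀ k, 0 < c k)
    (hanti : ∀ k p q, c k * Dmetric p q ≤ Dmetric (W k p) (W k q)) :
    ∀ {m : ℕ} (w : Fin m → Fin n) (p q : ℝ × ℂ),
      cprod c w * Dmetric p q ≤ Dmetric (wcomp W w p) (wcomp W w q) := by
  intro m
  induction m with
  | zero => intro w p q; rw [cprod_zero]; simp [wcomp]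
  | succ m ih =>
    intro w p q
    rw [cprod_succ]
    calc c (w 0) * cprod c (Fin.tail w) * Dmetric p q
        = c (w 0) * (cprod c (Fin.tail w) * Dmetric p q) := by ring
      _ ≤ c (w 0) * Dmetric (wcomp W (Fin.tail w) p) (wcomp W (Fin.tail w) q) :=
          mul_le_mul_of_nonneg_left (ih (Fin.tail w) p q) (hc (w 0)).le
      _ ≤ Dmetric (W (w 0) (wcomp W (Fin.tail w) p)) (W (w 0) (wcomp W (Fin.tail w) q)) :=
          hanti (w 0) _ _
      _ = Dmetric (wcomp W w p) (wcomp W w q) := rfl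

lemma wcomp_cont {W : Fin n → ℝ × ℂ → ℝ × ℂ} {C : Fin n → ℝ} (hC : ∀ k, 0 ≤ C k)
    (hlip : ∀ k p q, Dmetric (W k p) (W k q) ≤ C k * Dmetric p q) :
    ∀ {m : ℕ} (w : Fin m → Fin n), Continuous (wcomp W w) := by
  intro m
  induction m with
  | zero => intro w; simpa [wcomp] using continuous_id
  | succ m ih =>
    intro w
    exact (continuous_of_Dlip (hC (w 0)) (hlip (w 0))).comp (ih (Fin.tail w))

lemma wcomp_inj {W : Fin n → ℝ × ℂ → ℝ × ℂ} {c : Fin n → ℝ} (hc : ∀ k, 0 < c k)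
    (hanti : ∀ k p q, c k * Dmetric p q ≤ Dmetric (W k p) (W k q))
    {m : ℕ} (w : Fin m → Fin n) : Function.Injective (wcomp W w) := by
  intro p q hpq
  have h1 := wcomp_anti hc hanti w p q
  rw [hpq, D_self] at h1
  have h2 : Dmetric p q ≤ 0 := by
    nlinarith [D_nonneg p q, cprod_pos hc w]
  exact D_eq_zero h2

lemma wcomp_inter_finite {W : Fin n → ℝ × ℂ → ℝ × ℂ} {c : Fin n → ℝ}
    {G V : Set (ℝ × ℂ)} {ga gb : ℝ × ℂ}
    (hc : ∀ k, 0 < c k)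
    (hanti : ∀ k p q, c k * Dmetric p q ≤ Dmetric (W k p) (W k q))
    (hWG : ∀ k, W k '' G ⊆ G)
    (hGV : ∀ p ∈ G, p ∉ V → p = ga ∨ p = gb)
    (hVdisj : Pairwise fun i j => Disjoint (W i '' V) (W j '' V)) :
    ∀ {m : ℕ} (w w' : Fin m → Fin n), w ≠ w' →
      ((wcomp W w '' G) ∩ (wcomp W w' '' G)).Finite := by
  intro m
  induction m with
  | zero =>
    intro w w' hne
    exact absurd (funext fun i => i.elim0) hne
  | succ m ih =>
    intro w w' hne
    by_cases h0 : w 0 = w' 0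
    · have htail : Fin.tail w ≠ Fin.tail w' := by
        intro h
        apply hne
        have hw := Fin.cons_self_tail w
        have hw' := Fin.cons_self_tail w'
        rw [← hw, ← hw', h0, h]
      have hinj : Function.Injective (W (w 0)) := by
        intro p q hpq
        have h1 := hanti (w 0) p q
        rw [hpq, D_self] at h1
        have h2 : Dmetric p q ≤ 0 := by nlinarith [D_nonneg p q, hc (w 0)]
        exact D_eq_zero h2
      have heq : (wcomp W w '' G) ∩ (wcomp W w' '' G)
          = W (w 0) '' ((wcomp W (Fin.tail w) '' G) ∩ (wcomp W (Fin.tail w') '' G)) := by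
        show ((W (w 0) ∘ wcomp W (Fin.tail w)) '' G) ∩ ((W (w' 0) ∘ wcomp W (Fin.tail w')) '' G) = _
        rw [← h0, Set.image_comp, Set.image_comp, ← Set.image_inter hinj]
      rw [heq]
      exact (ih (Fin.tail w) (Fin.tail w') htail).image _
    · have hsub : (wcomp W w '' G) ∩ (wcomp W w' '' G)
          ⊆ (W (w 0) '' {ga, gb}) ∪ (W (w' 0) '' {ga, gb}) := by
        rintro p ⟨hp1, hp2⟩
        obtain ⟨g1, hg1, hpg1⟩ := hp1
        obtain ⟨g2, hg2, hpg2⟩ := hp2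
        have hug : wcomp W (Fin.tail w) g1 ∈ G :=
          wcomp_image_subset hWG (Fin.tail w) ⟨g1, hg1, rfl⟩
        have hug' : wcomp W (Fin.tail w') g2 ∈ G :=
          wcomp_image_subset hWG (Fin.tail w') ⟨g2, hg2, rfl⟩
        have hpu : p = W (w 0) (wcomp W (Fin.tail w) g1) := hpg1.symm
        have hpu' : p = W (w' 0) (wcomp W (Fin.tail w') g2) := hpg2.symm
        by_cases huV : wcomp W (Fin.tail w) g1 ∈ V
        · by_cases huV' : wcomp W (Fin.tail w') g2 ∈ V
          · exfalso
            have hd := hVdisj h0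
            exact Set.disjoint_left.1 hd ⟨_, huV, hpu.symm⟩ ⟨_, huV', hpu'.symm⟩
          · rcases hGV _ hug' huV' with h | h <;>
              exact Or.inr ⟨_, by rw [h]; simp, hpu'.symm⟩
        · rcases hGV _ hug huV with h | h <;>
            exact Or.inl ⟨_, by rw [h]; simp, hpu.symm⟩
      refine Set.Finite.subset (Set.Finite.union ?_ ?_) hsub <;>
        exact (Set.toFinite _).image _

end MoranAux

open MoranAux in
/-- lower bound for the Hausdorff dimension of the attractor (the graph
of a continuous function) of an IFS on `J × ℂ` satisfying bi-Lipschitz bounds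
`cₖ D(p,q) ≤ D(Wₖ p, Wₖ q) ≤ Cₖ D(p,q)` and the strong open set condition with
`V = (x₁, x_N) × ℂ` : if `∑ₖ cₖ ^ r = 1` then `r ≤ dimH G`. -/
theorem dimH_attractor_lower_bound
    (n : ℕ) (hn : 1 ≤ n) (x : Fin (n + 1) → ℝ) (hx : StrictMono x)
    (W : Fin n → ℝ × ℂ → ℝ × ℂ) (c C : Fin n → ℝ)
    (hc : ∀ k, 0 < c k) (hcC : ∀ k, c k ≤ C k) (hC : ∀ k, C k < 1)
    (hbilip : ∀ k, ∀ p q : ℝ × ℂ,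
      c k * Dmetric p q ≤ Dmetric (W k p) (W k q) ∧
      Dmetric (W k p) (W k q) ≤ C k * Dmetric p q)
    (F : ℝ → ℂ) (hF : ContinuousOn F (Icc (x 0) (x (Fin.last n))))
    (G : Set (ℝ × ℂ)) (hG : G = Set.graphOn F (Icc (x 0) (x (Fin.last n))))
    (hattr : G = ⋃ k, W k '' G)
    (V : Set (ℝ × ℂ)) (hV : V = Ioo (x 0) (x (Fin.last n)) ×ˢ (univ : Set ℂ))
    (hVsub : ∀ k, W k '' V ⊆ V)
    (hVdisj : Pairwise fun i j => Disjoint (W i '' V) (W j '' V))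
    (hVG : (V ∩ G).Nonempty)
    (r : ℝ) (hr : ∑ k, c k ^ r = 1) :
    ENNReal.ofReal r ≤ dimH G := by
  classical
  rcases le_or_gt r 0 with hr0 | hr0
  · rw [ENNReal.ofReal_of_nonpos hr0]
    exact zero_le
  -- reduce to the case of a slightly smaller exponent
  suffices H : ∀ ε : ℝ, 0 < ε → ε < r → ENNReal.ofReal (r - ε) ≤ dimH G by
    by_contra hcon
    push_neg at hcon
    have hdtop : dimH G ≠ ⊤ := hcon.ne_top
    have hdr : (dimH G).toReal < r := (ENNReal.lt_ofReal_iff_toReal_lt hdtop).1 hcon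
    have hdnn : 0 ≤ (dimH G).toReal := ENNReal.toReal_nonneg
    have h3 := H ((r - (dimH G).toReal) / 2) (by linarith) (by linarith)
    have h4 : dimH G < ENNReal.ofReal (r - (r - (dimH G).toReal) / 2) := by
      rw [ENNReal.lt_ofReal_iff_toReal_lt hdtop]
      linarith
    exact absurd h3 (not_le.2 h4)
  intro ε hε hεr
  set t : ℝ := r - ε with ht_def
  have ht : 0 < t := by simp only [ht_def]; linarith
  have hn0 : 0 < n := hn
  haveI : Nonempty (Fin n) := ⟨⟨0, hn0⟩⟩
  -- basic data
  set a := x 0 with ha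
  set b := x (Fin.last n) with hb
  have hab : a < b := by
    apply hx
    rw [Fin.lt_def]
    simp only [Fin.val_zero, Fin.val_last]
    omega
  set ga : ℝ × ℂ := (a, F a) with hga
  set gb : ℝ × ℂ := (b, F b) with hgb
  have hGim : G = (fun u => (u, F u)) '' (Icc a b) := by rw [hG]; rfl
  have hmemG' : ∀ u ∈ Icc a b, (u, F u) ∈ G := by
    intro u hu; rw [hGim]; exact ⟨u, hu, rfl⟩
  have hmemG : ∀ p ∈ G, p.1 ∈ Icc a b ∧ p = (p.1, F p.1) := by
    intro p hp
    rw [hGim] at hp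
    obtain ⟨u, hu, hup⟩ := hp
    constructor
    · rw [← hup]; exact hu
    · rw [← hup]
  have hgaG : ga ∈ G := hmemG' a ⟨le_refl a, hab.le⟩
  have hgbG : gb ∈ G := hmemG' b ⟨hab.le, le_refl b⟩
  have hgagb : ga ≠ gb := by
    intro h
    have : a = b := congrArg Prod.fst h
    exact absurd this hab.ne
  have hGc : IsCompact G := by
    rw [hGim]
    exact isCompact_Icc.image_of_continuousOn (continuousOn_id.prodMk hF)
  have hGconn : IsConnected G := by
    rw [hGim]
    exact ⟨⟨(a, F a), ⟨a, ⟨le_refl a, hab.le⟩, rfl⟩⟩,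
      (isPreconnected_Icc).image _ (continuousOn_id.prodMk hF)⟩
  have hWkG : ∀ k, W k '' G ⊆ G := by
    intro k
    calc W k '' G ⊆ ⋃ k, W k '' G := Set.subset_iUnion (fun k => W k '' G) k
      _ = G := hattr.symm
  have hGV : ∀ p ∈ G, p ∉ V → p = ga ∨ p = gb := by
    intro p hp hpV
    obtain ⟨hpIcc, hpeq⟩ := hmemG p hp
    have hpV' : p.1 ∉ Ioo a b := by
      intro hIoo
      exact hpV (by rw [hV]; exact ⟨hIoo, Set.mem_univ _⟩)
    have : p.1 = a ∨ p.1 = b := by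
      rcases hpIcc with ⟨h1, h2⟩
      rcases eq_or_lt_of_le h1 with h | h
      · exact Or.inl h.symm
      rcases eq_or_lt_of_le h2 with h' | h'
      · exact Or.inr h'
      exact absurd ⟨h, h'⟩ hpV'
    rcases this with h | h
    · left; rw [hpeq, h]
    · right; rw [hpeq, h]
  have hanti' : ∀ k (p q : ℝ × ℂ), c k * Dmetric p q ≤ Dmetric (W k p) (W k q) :=
    fun k p q => (hbilip k p q).1
  have hlip' : ∀ k (p q : ℝ × ℂ), Dmetric (W k p) (W k q) ≤ C k * Dmetric p q :=
    fun k p q => (hbilip k p q).2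
  have hCpos : ∀ k, 0 < C k := fun k => lt_of_lt_of_le (hc k) (hcC k)
  -- the maximal upper contraction ratio
  set Cm := Finset.univ.sup' Finset.univ_nonempty C with hCm
  have hCm1 : Cm < 1 := (Finset.sup'_lt_iff Finset.univ_nonempty).2 fun k _ => hC k
  have hCm0 : 0 < Cm :=
    lt_of_lt_of_le (hCpos ⟨0, hn0⟩) (Finset.le_sup' C (Finset.mem_univ _))
  have hcCm : ∀ k, c k ≤ Cm := fun k =>
    le_trans (hcC k) (Finset.le_sup' C (Finset.mem_univ k))
  -- choose the level m
  obtain ⟨m, hm⟩ : ∃ m : ℕ, Cm ^ m < min ((1/2 : ℝ) ^ ε⁻¹) ((1/4 : ℝ) ^ r⁻¹) := by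
    have htend := tendsto_pow_atTop_nhds_zero_of_lt_one hCm0.le hCm1
    have hposmin : (0:ℝ) < min ((1/2 : ℝ) ^ ε⁻¹) ((1/4 : ℝ) ^ r⁻¹) :=
      lt_min (Real.rpow_pos_of_pos (by norm_num) _) (Real.rpow_pos_of_pos (by norm_num) _)
    exact (htend.eventually_lt_const hposmin).exists
  have hmε : (Cm ^ m : ℝ) ^ ε ≤ 1/2 := by
    have h1 : (Cm ^ m : ℝ) ^ ε ≤ ((1/2 : ℝ) ^ ε⁻¹) ^ ε :=
      Real.rpow_le_rpow (by positivity) (le_of_lt (lt_of_lt_of_le hm (min_le_left _ _))) hε.le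
    rwa [Real.rpow_inv_rpow (by norm_num) hε.ne'] at h1
  have hmr : (Cm ^ m : ℝ) ^ r ≤ 1/4 := by
    have h1 : (Cm ^ m : ℝ) ^ r ≤ ((1/4 : ℝ) ^ r⁻¹) ^ r :=
      Real.rpow_le_rpow (by positivity) (le_of_lt (lt_of_lt_of_le hm (min_le_right _ _))) hr0.le
    rwa [Real.rpow_inv_rpow (by norm_num) hr0.ne'] at h1
  -- pieces at level m
  set Gw : (Fin m → Fin n) → Set (ℝ × ℂ) := fun w => wcomp W w '' G with hGwdef
  set Sw : (Fin m → Fin n) → Set ℝ := fun w => Prod.fst '' Gw w with hSwdef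
  set aw : (Fin m → Fin n) → ℝ := fun w => sInf (Sw w) with hawdef
  set bw : (Fin m → Fin n) → ℝ := fun w => sSup (Sw w) with hbwdef
  have hcont : ∀ w : Fin m → Fin n, Continuous (wcomp W w) :=
    fun w => wcomp_cont (fun k => (hCpos k).le) hlip' w
  have hGwsub : ∀ w, Gw w ⊆ G := fun w => wcomp_image_subset hWkG w
  have hGwc : ∀ w, IsCompact (Gw w) := fun w => hGc.image (hcont w)
  have hGwconn : ∀ w, IsConnected (Gw w) := fun w => hGconn.image _ (hcont w).continuousOn
  have hSIcc : ∀ w, Sw w = Icc (aw w) (bw w) := by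
    intro w
    exact eq_Icc_of_connected_compact ((hGwconn w).image _ continuous_fst.continuousOn)
      ((hGwc w).image continuous_fst)
  have htIn : ∀ w, ∀ u ∈ Sw w, (u, F u) ∈ Gw w := by
    intro w u hu
    obtain ⟨p, hp, hpu⟩ := hu
    have hpG : p ∈ G := hGwsub w hp
    have := (hmemG p hpG).2
    rw [← hpu, ← this]
    exact hp
  have haltb : ∀ w, aw w < bw w := by
    intro w
    have hpmem : wcomp W w ga ∈ Gw w := ⟨ga, hgaG, rfl⟩
    have hqmem : wcomp W w gb ∈ Gw w := ⟨gb, hgbG, rfl⟩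
    have hpq : wcomp W w ga ≠ wcomp W w gb := by
      intro h
      exact hgagb (wcomp_inj hc hanti' w h)
    have h1 : (wcomp W w ga).1 ∈ Icc (aw w) (bw w) := by
      rw [← hSIcc]; exact ⟨_, hpmem, rfl⟩
    have h2 : (wcomp W w gb).1 ∈ Icc (aw w) (bw w) := by
      rw [← hSIcc]; exact ⟨_, hqmem, rfl⟩
    rcases eq_or_lt_of_le (h1.1.trans h1.2 : aw w ≤ bw w) with heq | hlt
    · exfalso
      have hfst : (wcomp W w ga).1 = (wcomp W w gb).1 := by
        have e1 : (wcomp W w ga).1 = aw w := le_antisymm (heq ▸ h1.2) h1.1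
        have e2 : (wcomp W w gb).1 = aw w := le_antisymm (heq ▸ h2.2) h2.1
        rw [e1, e2]
      apply hpq
      have hP := (hmemG _ (hGwsub w hpmem)).2
      have hQ := (hmemG _ (hGwsub w hqmem)).2
      rw [hP, hQ, hfst]
    · exact hlt
  have htri : ∀ w w', w ≠ w' → bw w ≤ aw w' ∨ bw w' ≤ aw w := by
    intro w w' hne
    by_contra hcon
    push_neg at hcon
    obtain ⟨h1, h2⟩ := hcon
    have hfin : (Gw w ∩ Gw w').Finite :=
      wcomp_inter_finite hc hanti' hWkG hGV hVdisj w w' hne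
    have hSsub : Icc (max (aw w) (aw w')) (min (bw w) (bw w')) ⊆ Sw w ∩ Sw w' := by
      intro u hu
      constructor
      · rw [hSIcc]
        exact ⟨le_trans (le_max_left _ _) hu.1, le_trans hu.2 (min_le_left _ _)⟩
      · rw [hSIcc]
        exact ⟨le_trans (le_max_right _ _) hu.1, le_trans hu.2 (min_le_right _ _)⟩
    have hproj : Sw w ∩ Sw w' ⊆ Prod.fst '' (Gw w ∩ Gw w') := by
      intro u hu
      exact ⟨(u, F u), ⟨htIn w u hu.1, htIn w' u hu.2⟩, rfl⟩
    have hSfin : (Sw w ∩ Sw w').Finite := (hfin.image Prod.fst).subset hproj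
    have hmaxmin : max (aw w) (aw w') < min (bw w) (bw w') := by
      rcases max_cases (aw w) (aw w') with ⟨hm1, _⟩ | ⟨hm1, _⟩ <;>
        rcases min_cases (bw w) (bw w') with ⟨hm2, _⟩ | ⟨hm2, _⟩ <;>
        rw [hm1, hm2]
      · exact haltb w
      · exact h2
      · exact h1
      · exact haltb w'
    exact ((Set.Icc_infinite hmaxmin).mono hSsub) hSfin
  have hawinj : ∀ w w', w ≠ w' → aw w ≠ aw w' := by
    intro w w' hne heq
    rcases htri w w' hne with h | h
    · have := haltb w; have := haltb w'; linarith [heq]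
    · have := haltb w; have := haltb w'; linarith [heq]
  -- ranks
  set rk : (Fin m → Fin n) → ℕ :=
    fun w => (Finset.univ.filter (fun v => aw v < aw w)).card with hrkdef
  have hrkmono : ∀ w w', aw w < aw w' → rk w < rk w' := by
    intro w w' hlt
    have hsub : Finset.univ.filter (fun v => aw v < aw w)
        ⊆ Finset.univ.filter (fun v => aw v < aw w') := by
      intro v hv
      simp only [Finset.mem_filter, Finset.mem_univ, true_and] at hv ⊢
      exact hv.trans hlt
    have hmem : w ∈ Finset.univ.filter (fun v => aw v < aw w') := by
      simp only [Finset.mem_filter, Finset.mem_univ, true_and]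
      exact hlt
    have hnmem : w ∉ Finset.univ.filter (fun v => aw v < aw w) := by
      simp only [Finset.mem_filter, Finset.mem_univ, true_and, not_lt]
      exact le_refl _
    exact Finset.card_lt_card (Finset.ssubset_def.2
      ⟨hsub, fun hcon => hnmem (hcon hmem)⟩)
  have hbetween : ∀ w w', aw w < aw w' → rk w + 2 ≤ rk w' →
      ∃ v, aw w < aw v ∧ aw v < aw w' := by
    intro w w' hlt hrk2
    have hins : Finset.univ.filter (fun v => aw v ≤ aw w)
        = insert w (Finset.univ.filter (fun v => aw v < aw w)) := by
      ext v
      simp only [Finset.mem_filter, Finset.mem_univ, true_and, Finset.mem_insert]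
      constructor
      · intro hv
        rcases lt_or_eq_of_le hv with h | h
        · exact Or.inr h
        · left
          by_contra hne
          exact hawinj v w hne h
      · rintro (rfl | hv)
        · exact le_refl _
        · exact hv.le
    have hcard2 : (Finset.univ.filter (fun v => aw v ≤ aw w)).card = rk w + 1 := by
      rw [hins, Finset.card_insert_of_notMem (by
        simp only [Finset.mem_filter, Finset.mem_univ, true_and, not_lt]
        exact le_refl _)]
    have hnotsub : ¬ (Finset.univ.filter (fun v => aw v < aw w'))
        ⊆ (Finset.univ.filter (fun v => aw v ≤ aw w)) := by
      intro hsub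
      have hcle := Finset.card_le_card hsub
      rw [hcard2] at hcle
      have : (Finset.univ.filter (fun v => aw v < aw w')).card = rk w' := rfl
      omega
    obtain ⟨v, hv1, hv2⟩ := Finset.not_subset.1 hnotsub
    simp only [Finset.mem_filter, Finset.mem_univ, true_and] at hv1 hv2
    exact ⟨v, not_le.1 hv2, hv1⟩
  -- total mass at level m
  set fm : (Fin m → Fin n) → ℝ := fun w => cprod c w ^ r with hfmdef
  have hfm0 : ∀ w, 0 < fm w := fun w => Real.rpow_pos_of_pos (cprod_pos hc w) r
  have hmass : ∑ w : Fin m → Fin n, fm w = 1 := by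
    have hrw : ∀ w : Fin m → Fin n, fm w = ∏ i, c (w i) ^ r := by
      intro w
      simp only [hfmdef]
      unfold cprod
      rw [Real.finset_prod_rpow _ _ (fun i _ => (hc (w i)).le)]
    rw [Finset.sum_congr rfl (fun w _ => hrw w)]
    have hps := Finset.prod_univ_sum (fun _ : Fin m => (Finset.univ : Finset (Fin n)))
      (fun _ k => c k ^ r)
    rw [Fintype.piFinset_univ] at hps
    rw [← hps]
    rw [Finset.prod_congr rfl (fun _ _ => hr)]
    exact Finset.prod_const_one
  -- select a well-separated subfamily carrying at least half the mass
  have hselect : ∃ A : Finset (Fin m → Fin n), (1/2 : ℝ) ≤ ∑ w ∈ A, fm w ∧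
      ∀ w ∈ A, ∀ w' ∈ A, rk w < rk w' → rk w + 2 ≤ rk w' := by
    have hsplit := Finset.sum_filter_add_sum_filter_not Finset.univ
      (fun w => Even (rk w)) fm
    rw [hmass] at hsplit
    rcases le_or_gt (1/2 : ℝ)
        (∑ w ∈ Finset.univ.filter (fun w => Even (rk w)), fm w) with hA | hA
    · refine ⟨_, hA, ?_⟩
      intro w hw w' hw' hlt
      simp only [Finset.mem_filter, Finset.mem_univ, true_and] at hw hw'
      obtain ⟨p, hp⟩ := hw
      obtain ⟨p', hp'⟩ := hw'
      omega
    · refine ⟨Finset.univ.filter (fun w => ¬ Even (rk w)), by linarith, ?_⟩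
      intro w hw w' hw' hlt
      simp only [Finset.mem_filter, Finset.mem_univ, true_and,
        Nat.not_even_iff_odd] at hw hw'
      obtain ⟨p, hp⟩ := hw
      obtain ⟨p', hp'⟩ := hw'
      omega
  obtain ⟨A, hAhalf, hAgap⟩ := hselect
  -- the separation constant
  haveI : Nonempty (Fin m → Fin n) := ⟨fun _ => ⟨0, hn0⟩⟩
  set d₀ := Finset.univ.inf' Finset.univ_nonempty (fun v => bw v - aw v) with hd₀def
  have hd₀pos : 0 < d₀ := by
    rw [hd₀def, Finset.lt_inf'_iff]
    exact fun v _ => sub_pos.2 (haltb v)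
  have hd₀le : ∀ v, d₀ ≤ bw v - aw v :=
    fun v => Finset.inf'_le _ (Finset.mem_univ v)
  -- separation of the selected pieces
  have hsepkey : ∀ w ∈ A, ∀ w' ∈ A, aw w < aw w' →
      ∀ p ∈ Gw w, ∀ q ∈ Gw w', d₀ ≤ q.1 - p.1 := by
    intro w hw w' hw' hlt p hp q hq
    obtain ⟨v, hv1, hv2⟩ := hbetween w w' hlt (hAgap w hw w' hw' (hrkmono _ _ hlt))
    have hwv : w ≠ v := by
      intro h; rw [h] at hv1; exact lt_irrefl _ hv1
    have hvw' : v ≠ w' := by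
      intro h; rw [h] at hv2; exact lt_irrefl _ hv2
    have h1 : bw w ≤ aw v := by
      rcases htri w v hwv with h | h
      · exact h
      · exfalso; have := haltb v; linarith
    have h2 : bw v ≤ aw w' := by
      rcases htri v w' hvw' with h | h
      · exact h
      · exfalso; have := haltb w'; linarith
    have hp1 : p.1 ∈ Icc (aw w) (bw w) := by
      rw [← hSIcc]; exact ⟨p, hp, rfl⟩
    have hq1 : q.1 ∈ Icc (aw w') (bw w') := by
      rw [← hSIcc]; exact ⟨q, hq, rfl⟩
    have := hd₀le v
    have hpb : p.1 ≤ bw w := hp1.2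
    have hqa : aw w' ≤ q.1 := hq1.1
    linarith
  have hsep : ∀ w ∈ A, ∀ w' ∈ A, w ≠ w' →
      ∀ p ∈ Gw w, ∀ q ∈ Gw w', d₀ ≤ Dmetric p q := by
    intro w hw w' hw' hne p hp q hq
    rcases (hawinj w w' hne).lt_or_gt with h | h
    · have h1 := hsepkey w hw w' hw' h p hp q hq
      calc d₀ ≤ q.1 - p.1 := h1
        _ ≤ |p.1 - q.1| := by rw [abs_sub_comm]; exact le_abs_self _
        _ ≤ Dmetric p q := abs_fst_le_D p q
    · have h1 := hsepkey w' hw' w hw h q hq p hp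
      calc d₀ ≤ p.1 - q.1 := h1
        _ ≤ |p.1 - q.1| := le_abs_self _
        _ ≤ Dmetric p q := abs_fst_le_D p q
  -- the selected family has at least two elements
  have hfm14 : ∀ w : Fin m → Fin n, fm w ≤ 1/4 := by
    intro w
    have h1 : cprod c w ≤ Cm ^ m := cprod_le hc hcCm w
    have h2 : fm w ≤ (Cm ^ m) ^ r :=
      Real.rpow_le_rpow (cprod_pos hc w).le h1 hr0.le
    linarith [hmr]
  have hA2 : 2 ≤ A.card := by
    by_contra hcon
    push_neg at hcon
    have hA1 : A.card ≤ 1 := by omega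
    obtain ⟨w₀, hw₀⟩ := Finset.card_le_one_iff_subset_singleton.1 hA1
    have hsum_le : ∑ w ∈ A, fm w ≤ 1/4 := by
      calc ∑ w ∈ A, fm w ≤ ∑ w ∈ {w₀}, fm w :=
            Finset.sum_le_sum_of_subset_of_nonneg hw₀ (fun w _ _ => (hfm0 w).le)
        _ = fm w₀ := Finset.sum_singleton _ _
        _ ≤ 1/4 := hfm14 w₀
    linarith
  -- mass boost
  have hsumR : 1 ≤ ∑ w ∈ A, cprod c w ^ t := by
    have hboost : ∀ w : Fin m → Fin n, 2 * fm w ≤ cprod c w ^ t := by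
      intro w
      have hcw0 : 0 < cprod c w := cprod_pos hc w
      have hsplitw : cprod c w ^ t = cprod c w ^ r * cprod c w ^ (-ε) := by
        rw [show t = r + -ε from by rw [ht_def]; ring]
        exact Real.rpow_add hcw0 r (-ε)
      have hcwε : cprod c w ^ ε ≤ 1/2 := by
        have h1 : cprod c w ^ ε ≤ (Cm ^ m) ^ ε :=
          Real.rpow_le_rpow hcw0.le (cprod_le hc hcCm w) hε.le
        linarith [hmε]
      have hcwεpos : 0 < cprod c w ^ ε := Real.rpow_pos_of_pos hcw0 ε
      have hcwnegε : 2 ≤ cprod c w ^ (-ε) := by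
        rw [Real.rpow_neg hcw0.le]
        have h2 : ((1:ℝ)/2)⁻¹ ≤ (cprod c w ^ ε)⁻¹ :=
          inv_anti₀ hcwεpos hcwε
        have h3 : ((1:ℝ)/2)⁻¹ = 2 := by norm_num
        linarith
      calc 2 * fm w = fm w * 2 := by ring
        _ ≤ fm w * cprod c w ^ (-ε) :=
            mul_le_mul_of_nonneg_left hcwnegε (hfm0 w).le
        _ = cprod c w ^ t := by rw [hsplitw, hfmdef]
    calc (1:ℝ) = 2 * (1/2) := by norm_num
      _ ≤ 2 * ∑ w ∈ A, fm w := by linarith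
      _ = ∑ w ∈ A, 2 * fm w := Finset.mul_sum _ _ _
      _ ≤ ∑ w ∈ A, cprod c w ^ t := Finset.sum_le_sum fun w _ => hboost w
  -- apply the abstract lower bound
  have happly := dimH_lower G ⟨ga, hgaG⟩ hGc A (fun w => wcomp W w) (fun w => cprod c w)
    (fun w _ => cprod_pos hc w)
    (fun w _ => wcomp_image_subset hWkG w)
    (fun w _ p q => wcomp_anti hc hanti' w p q)
    d₀ hd₀pos
    (fun w hw w' hw' hne p hp q hq => hsep w hw w' hw' hne p hp q hq)
    hA2 t ht hsumR
  exact happly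
end

section
/- Under the same hypotheses (bi-Lipschitz bounds cₖ·D(p,q) ≤ D(Wₖ(p),Wₖ(q)) ≤ Cₖ·D(p,q) with 0 < cₖ ≤ Cₖ < 1), the attractor G of the IFS satisfies dimH(G) ≤ R, where R is the unique solution of Σₖ Cₖ^R = 1. -/
open Set Filter

/-- Iterated composition of the IFS maps along a word `w : Fin m → Fin n`. -/
def PhiW {n : ℕ} (W : Fin n → ℝ × ℂ → ℝ × ℂ) : ∀ m : ℕ, (Fin m → Fin n) → ℝ × ℂ → ℝ × ℂ
  | 0, _ => id
  | (m + 1), w => W (w 0) ∘ PhiW W m (Fin.tail w)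

/-- upper bound for the Hausdorff dimension of the attractor `G` of an
IFS on `J × ℂ` with bi-Lipschitz bounds `cₖ D(p,q) ≤ D(Wₖ p, Wₖ q) ≤ Cₖ D(p,q)` :
if `∑ₖ Cₖ ^ R = 1` then `dimH G ≤ R`. -/
theorem dimH_attractor_upper_bound
    (n : ℕ) (hn : 1 ≤ n) (x : Fin (n + 1) → ℝ) (hx : StrictMono x)
    (W : Fin n → ℝ × ℂ → ℝ × ℂ) (c C : Fin n → ℝ)
    (hc : ∀ k, 0 < c k) (hcC : ∀ k, c k ≤ C k) (hC : ∀ k, C k < 1)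
    (hbilip : ∀ k, ∀ p q : ℝ × ℂ,
      c k * Dmetric p q ≤ Dmetric (W k p) (W k q) ∧
      Dmetric (W k p) (W k q) ≤ C k * Dmetric p q)
    (F : ℝ → ℂ) (hF : ContinuousOn F (Icc (x 0) (x (Fin.last n))))
    (G : Set (ℝ × ℂ)) (hG : G = Set.graphOn F (Icc (x 0) (x (Fin.last n))))
    (hattr : G = ⋃ k, W k '' G)
    (R : ℝ) (hR : ∑ k, C k ^ R = 1) :
    dimH G ≤ ENNReal.ofReal R := by
  have hCpos : ∀ k, 0 < C k := fun k => (hc k).trans_le (hcC k)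
  have k0 : Fin n := ⟨0, hn⟩
  -- R is nonnegative
  have hR0 : 0 ≤ R := by
    by_contra hneg
    push_neg at hneg
    have h1 : (1 : ℝ) < C k0 ^ R :=
      (Real.one_lt_rpow_iff_of_pos (hCpos k0)).2 (Or.inr ⟨hC k0, hneg⟩)
    have h2 : C k0 ^ R ≤ ∑ k, C k ^ R :=
      Finset.single_le_sum (fun k _ => (Real.rpow_pos_of_pos (hCpos k) R).le)
        (Finset.mem_univ k0)
    rw [hR] at h2
    exact absurd (h1.trans_le h2) (lt_irrefl 1)
  -- basic facts about Dmetric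
  have hDnonneg : ∀ p q : ℝ × ℂ, 0 ≤ Dmetric p q := fun p q =>
    add_nonneg (abs_nonneg _) (norm_nonneg _)
  have hdistD : ∀ p q : ℝ × ℂ, dist p q ≤ Dmetric p q := by
    intro p q
    rw [Prod.dist_eq, Dmetric]
    refine max_le ?_ ?_
    · rw [Real.dist_eq]; exact le_add_of_nonneg_right (norm_nonneg _)
    · rw [dist_eq_norm]; exact le_add_of_nonneg_left (abs_nonneg _)
  have hDdist : ∀ p q : ℝ × ℂ, Dmetric p q ≤ 2 * dist p q := by
    intro p q
    rw [Prod.dist_eq, Dmetric, two_mul]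
    gcongr
    · rw [← Real.dist_eq]; exact le_max_left _ _
    · rw [← dist_eq_norm]; exact le_max_right _ _
  -- G is bounded
  have hGb : Bornology.IsBounded G := by
    have h1 : IsCompact (Icc (x 0) (x (Fin.last n))) := isCompact_Icc
    have h2 : IsCompact (F '' Icc (x 0) (x (Fin.last n))) := h1.image_of_continuousOn hF
    have hsub : G ⊆ (Icc (x 0) (x (Fin.last n))) ×ˢ (F '' Icc (x 0) (x (Fin.last n))) := by
      rw [hG]
      rintro p ⟨t, ht, rfl⟩
      exact ⟨ht, mem_image_of_mem _ ht⟩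
    exact ((h1.prod h2).isBounded).subset hsub
  obtain ⟨B₀, hB₀⟩ := Metric.isBounded_iff.1 hGb
  set B : ℝ := max B₀ 0 with hBdef
  have hB0 : 0 ≤ B := le_max_right _ _
  have hB : ∀ p ∈ G, ∀ q ∈ G, dist p q ≤ B := fun p hp q hq =>
    (hB₀ hp hq).trans (le_max_left _ _)
  -- covering of G by iterated images
  have hcover : ∀ m : ℕ, G ⊆ ⋃ w : Fin m → Fin n, PhiW W m w '' G := by
    intro m
    induction m with
    | zero =>
      intro p hp
      exact mem_iUnion.2 ⟨fun i => i.elim0, p, hp, rfl⟩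
    | succ m ih =>
      intro p hp
      rw [hattr] at hp
      obtain ⟨k, q, hq, rfl⟩ : ∃ k q, q ∈ G ∧ W k q = p := by
        simpa [mem_iUnion] using hp
      obtain ⟨w, r, hr, rfl⟩ : ∃ w r, r ∈ G ∧ PhiW W m w r = q := by
        simpa [mem_iUnion] using ih hq
      refine mem_iUnion.2 ⟨Fin.cons k w, r, hr, ?_⟩
      simp [PhiW, Fin.tail_cons]
  -- Lipschitz bound for iterated maps
  have hlip : ∀ m : ℕ, ∀ w : Fin m → Fin n, ∀ p q : ℝ × ℂ,
      Dmetric (PhiW W m w p) (PhiW W m w q) ≤ (∏ i, C (w i)) * Dmetric p q := by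
    intro m
    induction m with
    | zero => intro w p q; simp [PhiW]
    | succ m ih =>
      intro w p q
      have h1 := (hbilip (w 0) (PhiW W m (Fin.tail w) p) (PhiW W m (Fin.tail w) q)).2
      have h2 := ih (Fin.tail w) p q
      calc Dmetric (PhiW W (m + 1) w p) (PhiW W (m + 1) w q)
          ≤ C (w 0) * Dmetric (PhiW W m (Fin.tail w) p) (PhiW W m (Fin.tail w) q) := h1
        _ ≤ C (w 0) * ((∏ i, C (Fin.tail w i)) * Dmetric p q) := by
            exact mul_le_mul_of_nonneg_left h2 (hCpos (w 0)).le
        _ = (∏ i, C (w i)) * Dmetric p q := by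
            rw [Fin.prod_univ_succ]
            simp only [Fin.tail]
            ring
  have hPpos : ∀ m : ℕ, ∀ w : Fin m → Fin n, 0 < ∏ i, C (w i) := fun m w =>
    Finset.prod_pos fun i _ => hCpos (w i)
  -- diameter bound for pieces
  have hdiam : ∀ m : ℕ, ∀ w : Fin m → Fin n,
      EMetric.diam (PhiW W m w '' G) ≤ ENNReal.ofReal ((∏ i, C (w i)) * (2 * B)) := by
    intro m w
    apply EMetric.diam_le
    rintro u ⟨p, hp, rfl⟩ v ⟨q, hq, rfl⟩
    rw [edist_dist]
    apply ENNReal.ofReal_le_ofReal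
    calc dist (PhiW W m w p) (PhiW W m w q)
        ≤ Dmetric (PhiW W m w p) (PhiW W m w q) := hdistD _ _
      _ ≤ (∏ i, C (w i)) * Dmetric p q := hlip m w p q
      _ ≤ (∏ i, C (w i)) * (2 * B) := by
          apply mul_le_mul_of_nonneg_left _ (hPpos m w).le
          calc Dmetric p q ≤ 2 * dist p q := hDdist p q
            _ ≤ 2 * B := by linarith [hB p hp q hq]
  -- uniform contraction rate
  have hne : (Finset.univ : Finset (Fin n)).Nonempty := ⟨k0, Finset.mem_univ k0⟩
  set ρ : ℝ := Finset.univ.sup' hne C with hρdef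
  have hρle : ∀ k, C k ≤ ρ := fun k => Finset.le_sup' C (Finset.mem_univ k)
  have hρ1 : ρ < 1 := (Finset.sup'_lt_iff hne).2 fun k _ => hC k
  have hρ0 : 0 ≤ ρ := (hCpos k0).le.trans (hρle k0)
  have hPle : ∀ m : ℕ, ∀ w : Fin m → Fin n, (∏ i, C (w i)) ≤ ρ ^ m := by
    intro m w
    calc (∏ i, C (w i)) ≤ ∏ _i : Fin m, ρ :=
          Finset.prod_le_prod (fun i _ => (hCpos (w i)).le) (fun i _ => hρle (w i))
      _ = ρ ^ m := by simp
  -- apply the liminf covering bound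
  set r : ℕ → ENNReal := fun m => ENNReal.ofReal (ρ ^ m * (2 * B)) with hrdef
  have hr : Tendsto r atTop (nhds 0) := by
    have h1 : Tendsto (fun m : ℕ => ρ ^ m * (2 * B)) atTop (nhds 0) := by
      have := (tendsto_pow_atTop_nhds_zero_of_lt_one hρ0 hρ1).mul_const (2 * B)
      simpa using this
    have h2 := (ENNReal.continuous_ofReal.tendsto 0).comp h1
    rw [ENNReal.ofReal_zero] at h2; exact h2
  have key := MeasureTheory.Measure.hausdorffMeasure_le_liminf_sum R G r hr
    (fun m (w : Fin m → Fin n) => PhiW W m w '' G)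
    (Eventually.of_forall fun m w => (hdiam m w).trans (ENNReal.ofReal_le_ofReal
      (mul_le_mul_of_nonneg_right (hPle m w) (by linarith))))
    (Eventually.of_forall hcover)
  -- bound each sum by a constant
  have hsum : ∀ m : ℕ, (∑ w : Fin m → Fin n, EMetric.diam (PhiW W m w '' G) ^ R)
      ≤ ENNReal.ofReal ((2 * B) ^ R) := by
    intro m
    have step : ∀ w : Fin m → Fin n, EMetric.diam (PhiW W m w '' G) ^ R
        ≤ ENNReal.ofReal (((∏ i, C (w i)) * (2 * B)) ^ R) := by
      intro w
      rw [← ENNReal.ofReal_rpow_of_nonneg (mul_nonneg (hPpos m w).le (by linarith)) hR0]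
      exact ENNReal.rpow_le_rpow (hdiam m w) hR0
    calc (∑ w : Fin m → Fin n, EMetric.diam (PhiW W m w '' G) ^ R)
        ≤ ∑ w : Fin m → Fin n, ENNReal.ofReal (((∏ i, C (w i)) * (2 * B)) ^ R) :=
          Finset.sum_le_sum fun w _ => step w
      _ = ENNReal.ofReal (∑ w : Fin m → Fin n, ((∏ i, C (w i)) * (2 * B)) ^ R) :=
          (ENNReal.ofReal_sum_of_nonneg fun w _ =>
            Real.rpow_nonneg (mul_nonneg (hPpos m w).le (by linarith)) R).symm
      _ = ENNReal.ofReal ((2 * B) ^ R) := by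
          congr 1
          have expand : ∀ w : Fin m → Fin n,
              ((∏ i, C (w i)) * (2 * B)) ^ R = (∏ i, C (w i) ^ R) * (2 * B) ^ R := by
            intro w
            rw [Real.mul_rpow (hPpos m w).le (by linarith),
              ← Real.finset_prod_rpow _ _ (fun i _ => (hCpos (w i)).le)]
          simp_rw [expand, ← Finset.sum_mul]
          have : (∑ w : Fin m → Fin n, ∏ i, C (w i) ^ R) = 1 := by
            have := Finset.prod_univ_sum (fun _ : Fin m => (Finset.univ : Finset (Fin n)))
              (fun _ k => C k ^ R)
            rw [Fintype.piFinset_univ] at this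
            rw [← this, hR, Finset.prod_const_one]
          rw [this, one_mul]
  have hle2 : liminf (fun m => ∑ w : Fin m → Fin n, EMetric.diam (PhiW W m w '' G) ^ R) atTop
      ≤ ENNReal.ofReal ((2 * B) ^ R) := by
    refine le_trans (liminf_le_liminf (Eventually.of_forall hsum)) ?_
    simp [liminf_const]
  have hfin : (MeasureTheory.Measure.hausdorffMeasure R :
      MeasureTheory.Measure (ℝ × ℂ)) G ≠ ⊤ :=
    ne_top_of_le_ne_top ENNReal.ofReal_ne_top (le_trans key hle2)
  have hcoe : ((R.toNNReal : ℝ)) = R := Real.coe_toNNReal R hR0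
  have hd := dimH_le_of_hausdorffMeasure_ne_top (s := G) (d := R.toNNReal)
    (by rw [hcoe]; exact hfin)
  rwa [ENNReal.ofReal]
end
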